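/- Let S be a nonempty set and let A, B : S → ℝ be functions with A(x) ≥ 0 and B(x) > 0 for all x ∈ S; define g(x) = A(x)/B(x). Given x_k ∈ S, set y_k = √(A(x_k))/B(x_k), and suppose x_{k+1} ∈ S satisfies 2·y_k·√(A(x_{k+1})) − y_k²·B(x_{k+1}) ≥ 2·y_k·√(A(x)) − y_k²·B(x) for all x ∈ S. Then g(x_{k+1}) ≥ g(x_k); hence along the iterates of this alternating scheme the sequence (g(x_k)) is nondecreasing, and if g is bounded above on S it converges. -/

import Mathlib

/-- Monotone convergence of the alternating fractional-programming scheme: with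
`g = A/B`, `A ≥ 0` and `B > 0` on `S`, if from `x_k ∈ S` one sets `y_k = √(A x_k)/B x_k`
and picks `x_{k+1} ∈ S` maximizing the surrogate `x ↦ 2 y_k √(A x) − y_k² B x` over `S`,
then `g x_{k+1} ≥ g x_k`; hence along the iterates the sequence `g (x k)` is
nondecreasing, and it converges whenever `g` is bounded above on `S`. -/
theorem ao_fp_monotone_convergence {α : Type*} (S : Set α) (hS : S.Nonempty)
    (A B : α → ℝ) (hA : ∀ x ∈ S, 0 ≤ A x) (hB : ∀ x ∈ S, 0 < B x)
    (g : α → ℝ) (hg : ∀ x, g x = A x / B x) :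
    (∀ xk ∈ S, ∀ xk1 ∈ S,
      (∀ x ∈ S,
        2 * (Real.sqrt (A xk) / B xk) * Real.sqrt (A x) -
            (Real.sqrt (A xk) / B xk) ^ 2 * B x ≤
          2 * (Real.sqrt (A xk) / B xk) * Real.sqrt (A xk1) -
            (Real.sqrt (A xk) / B xk) ^ 2 * B xk1) →
      g xk ≤ g xk1) ∧
    (∀ x : ℕ → α, (∀ k, x k ∈ S) →
      (∀ k, ∀ z ∈ S,
        2 * (Real.sqrt (A (x k)) / B (x k)) * Real.sqrt (A z) -
            (Real.sqrt (A (x k)) / B (x k)) ^ 2 * B z ≤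
          2 * (Real.sqrt (A (x k)) / B (x k)) * Real.sqrt (A (x (k + 1))) -
            (Real.sqrt (A (x k)) / B (x k)) ^ 2 * B (x (k + 1))) →
      Monotone (fun k => g (x k)) ∧
      ((∃ C : ℝ, ∀ z ∈ S, g z ≤ C) →
        ∃ L : ℝ, Filter.Tendsto (fun k => g (x k)) Filter.atTop (nhds L))) := by
  have key : ∀ xk ∈ S, ∀ xk1 ∈ S,
      (2 * (Real.sqrt (A xk) / B xk) * Real.sqrt (A xk) -
            (Real.sqrt (A xk) / B xk) ^ 2 * B xk ≤
          2 * (Real.sqrt (A xk) / B xk) * Real.sqrt (A xk1) -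
            (Real.sqrt (A xk) / B xk) ^ 2 * B xk1) →
      g xk ≤ g xk1 := by
    intro xk hxk xk1 hxk1 h
    set y := Real.sqrt (A xk) / B xk with hy
    have hBk := hB xk hxk
    have hBk1 := hB xk1 hxk1
    have hAk := hA xk hxk
    have hAk1 := hA xk1 hxk1
    have hsk : Real.sqrt (A xk) ^ 2 = A xk := Real.sq_sqrt hAk
    have hsk1 : Real.sqrt (A xk1) ^ 2 = A xk1 := Real.sq_sqrt hAk1
    -- equality at xk: surrogate = g xk
    have hmul : Real.sqrt (A xk) * Real.sqrt (A xk) = A xk := Real.mul_self_sqrt hAk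
    have heq : 2 * y * Real.sqrt (A xk) - y ^ 2 * B xk = g xk := by
      rw [hg, hy]
      field_simp
      linear_combination hmul
    -- surrogate at xk1 ≤ g xk1
    have hle : 2 * y * Real.sqrt (A xk1) - y ^ 2 * B xk1 ≤ g xk1 := by
      rw [hg, le_div_iff₀ hBk1]
      nlinarith [sq_nonneg (Real.sqrt (A xk1) - y * B xk1), hsk1]
    linarith [h]
  constructor
  · intro xk hxk xk1 hxk1 h
    exact key xk hxk xk1 hxk1 (h xk hxk)
  · intro x hx h
    have mono : Monotone (fun k => g (x k)) := by
      apply monotone_nat_of_le_succ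
      intro k
      exact key (x k) (hx k) (x (k + 1)) (hx (k + 1)) (h k (x k) (hx k))
    refine ⟨mono, ?_⟩
    rintro ⟨C, hC⟩
    have hbdd : BddAbove (Set.range fun k => g (x k)) := by
      refine ⟨C, ?_⟩
      rintro _ ⟨k, rfl⟩
      exact hC (x k) (hx k)
    exact ⟨_, tendsto_atTop_ciSup mono hbdd⟩
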